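/- Let F : X → ℝ be a C¹ functional on a Hilbert space which is bounded below and satisfies the Palais–Smale condition. Then F is coercive: F(x) → ∞ as ‖x‖ → ∞. -/

import Mathlib

open Filter Topology

/-- Ekeland-type variational principle (weak form, fixed slope `k`). -/
lemma my_ekeland {Y : Type*} [MetricSpace Y] [CompleteSpace Y]
    (F : Y → ℝ) (hc : Continuous F) (m : ℝ) (hm : ∀ x, m ≤ F x)
    (k : ℝ) (hk : 0 < k) (u : Y) :
    ∃ v : Y, F v ≤ F u ∧ k * dist u v ≤ F u - F v ∧
      ∀ w, F v ≤ F w + k * dist v w := by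
  set S : Y → Set Y := fun v => {w | F w + k * dist w v ≤ F v} with hS
  have hself : ∀ v, v ∈ S v := by
    intro v; simp [hS]
  have hstep : ∀ (n : ℕ) (v : Y), ∃ w, w ∈ S v ∧ ∀ z ∈ S v, F w ≤ F z + (1/2 : ℝ)^n := by
    intro n v
    have hne : (F '' S v).Nonempty := ⟨F v, v, hself v, rfl⟩
    have hbdd : BddBelow (F '' S v) := ⟨m, by rintro y ⟨z, _, rfl⟩; exact hm z⟩
    obtain ⟨y, ⟨w, hwS, rfl⟩, hy⟩ := Real.lt_sInf_add_pos hne (ε := (1/2:ℝ)^n) (by positivity)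
    exact ⟨w, hwS, fun z hz => le_trans hy.le (by
      have := csInf_le hbdd ⟨z, hz, rfl⟩
      linarith)⟩
  choose step hstep1 hstep2 using hstep
  set x : ℕ → Y := fun n => Nat.rec u (fun n xn => step n xn) n with hx
  have hx0 : x 0 = u := rfl
  have hxs : ∀ n, x (n+1) = step n (x n) := fun n => rfl
  have hx1 : ∀ n, F (x (n+1)) + k * dist (x (n+1)) (x n) ≤ F (x n) := by
    intro n; rw [hxs n]; exact hstep1 n (x n)
  have hx2 : ∀ n, ∀ z ∈ S (x n), F (x (n+1)) ≤ F z + (1/2:ℝ)^n := by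
    intro n; rw [hxs n]; exact hstep2 n (x n)
  have hanti : Antitone (fun n => F (x n)) := by
    apply antitone_nat_of_succ_le
    intro n
    have h1 := hx1 n
    have h2 : 0 ≤ k * dist (x (n+1)) (x n) := by positivity
    linarith
  have key : ∀ n m', n ≤ m' → k * dist (x m') (x n) ≤ F (x n) - F (x m') := by
    intro n m' hnm
    induction m', hnm using Nat.le_induction with
    | base => simp
    | succ p hp ih =>
      have h1 := hx1 p
      have htri : dist (x (p+1)) (x n) ≤ dist (x (p+1)) (x p) + dist (x p) (x n) :=
        dist_triangle _ _ _
      have := mul_le_mul_of_nonneg_left htri hk.le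
      rw [mul_add] at this
      linarith
  set L : ℝ := ⨅ n, F (x n) with hL
  have hbdd' : BddBelow (Set.range fun n => F (x n)) := ⟨m, by rintro y ⟨n, rfl⟩; exact hm _⟩
  have hFL : Tendsto (fun n => F (x n)) atTop (𝓝 L) := tendsto_atTop_ciInf hanti hbdd'
  have hLle : ∀ n, L ≤ F (x n) := fun n => ciInf_le hbdd' n
  have hcauchy : CauchySeq x := by
    apply cauchySeq_of_le_tendsto_0 (fun N => (F (x N) - L) / k)
    · intro n m' N hn hm'
      rcases le_total n m' with h | h
      · rw [dist_comm, le_div_iff₀ hk]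
        have := key n m' h
        have := hanti hn
        have := hLle m'
        linarith
      · rw [le_div_iff₀ hk]
        have := key m' n h
        have := hanti hm'
        have := hLle n
        linarith
    · have : Tendsto (fun N => (F (x N) - L) / k) atTop (𝓝 ((L - L)/k)) :=
        ((hFL.sub tendsto_const_nhds).div_const k)
      simpa using this
  obtain ⟨v, hv⟩ := cauchySeq_tendsto_of_complete hcauchy
  have hFv : F v = L := tendsto_nhds_unique ((hc.tendsto v).comp hv) hFL
  have hvn : ∀ n, k * dist v (x n) ≤ F (x n) - F v := by
    intro n
    have h1 : Tendsto (fun m' => k * dist (x m') (x n)) atTop (𝓝 (k * dist v (x n))) :=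
      tendsto_const_nhds.mul ((Tendsto.dist hv tendsto_const_nhds))
    have h2 : Tendsto (fun m' => F (x n) - F (x m')) atTop (𝓝 (F (x n) - L)) :=
      tendsto_const_nhds.sub hFL
    rw [hFv]
    refine le_of_tendsto_of_tendsto h1 h2 ?_
    filter_upwards [eventually_ge_atTop n] with m' h
    exact key n m' h
  refine ⟨v, ?_, ?_, ?_⟩
  · rw [hFv]; exact hLle 0
  · have := hvn 0
    rw [hx0] at this
    rwa [dist_comm] at this
  · intro w
    by_contra hcon
    push_neg at hcon
    have hwS : ∀ n, w ∈ S (x n) := by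
      intro n
      have htri : dist w (x n) ≤ dist w v + dist v (x n) := dist_triangle _ _ _
      have h2 := hvn n
      have h3 := mul_le_mul_of_nonneg_left htri hk.le
      rw [mul_add] at h3
      simp only [hS, Set.mem_setOf_eq]
      rw [dist_comm v w] at hcon
      linarith
    have hlim : Tendsto (fun n => F (x (n+1))) atTop (𝓝 L) :=
      hFL.comp (tendsto_add_atTop_nat 1)
    have hbound : ∀ n, F (x (n+1)) ≤ F w + (1/2:ℝ)^n := fun n => hx2 n w (hwS n)
    have hlim2 : Tendsto (fun n : ℕ => F w + (1/2:ℝ)^n) atTop (𝓝 (F w + 0)) :=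
      tendsto_const_nhds.add (tendsto_pow_atTop_nhds_zero_of_lt_one (by norm_num) (by norm_num))
    have : L ≤ F w + 0 := le_of_tendsto_of_tendsto' hlim hlim2 hbound
    have hd : 0 ≤ k * dist v w := by positivity
    rw [← hFv] at this
    linarith
/-- If `F v ≤ F w + k * dist v w` for all `w`, the gradient at `v` has norm `≤ k`. -/
lemma grad_bound {X : Type*} [NormedAddCommGroup X] [InnerProductSpace ℝ X]
    [CompleteSpace X] (F : X → ℝ) (hF : Differentiable ℝ F) (v : X) (k : ℝ) (hk : 0 ≤ k)
    (h : ∀ w, F v ≤ F w + k * dist v w) : ‖gradient F v‖ ≤ k := by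
  have hgrad : ‖gradient F v‖ = ‖fderiv ℝ F v‖ := by
    rw [gradient]
    exact (InnerProductSpace.toDual ℝ X).symm.norm_map _
  rw [hgrad]
  have key : ∀ u : X, -(k * ‖u‖) ≤ fderiv ℝ F v u := by
    intro u
    have hcurve : HasDerivAt (fun t : ℝ => v + t • u) u 0 := by
      have h1 : HasDerivAt (fun t : ℝ => t • u) ((1:ℝ) • u) 0 :=
        (hasDerivAt_id (0:ℝ)).smul_const u
      simpa using (h1.const_add v)
    have hcomp : HasDerivAt (fun t : ℝ => F (v + t • u)) (fderiv ℝ F v u) 0 := by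
      have hf : HasFDerivAt F (fderiv ℝ F v) ((fun t : ℝ => v + t • u) 0) := by
        simpa using (hF v).hasFDerivAt
      exact hf.comp_hasDerivAt 0 hcurve
    have hslope := hasDerivAt_iff_tendsto_slope.mp hcomp
    have hslope' : Tendsto (slope (fun t : ℝ => F (v + t • u)) 0) (𝓝[>] 0)
        (𝓝 (fderiv ℝ F v u)) :=
      hslope.mono_left (nhdsWithin_mono 0 (fun t ht => ne_of_gt ht))
    refine ge_of_tendsto hslope' ?_
    filter_upwards [self_mem_nhdsWithin] with t ht
    have ht' : (0:ℝ) < t := ht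
    have hdist : dist v (v + t • u) = t * ‖u‖ := by
      rw [dist_eq_norm]
      simp [norm_smul, abs_of_pos ht']
    have h2 := h (v + t • u)
    rw [hdist] at h2
    rw [slope_def_field]
    simp only [zero_smul, add_zero, sub_zero]
    rw [le_div_iff₀ ht']
    nlinarith
  refine ContinuousLinearMap.opNorm_le_bound _ hk ?_
  intro u
  rw [Real.norm_eq_abs, abs_le]
  constructor
  · simpa using key u
  · have := key (-u)
    rw [map_neg, norm_neg] at this
    linarith

/-- A `C¹` functional on a Hilbert space which is bounded below and satisfies the
Palais–Smale condition is coercive. -/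
theorem stmt17 {X : Type*} [NormedAddCommGroup X] [InnerProductSpace ℝ X]
    [CompleteSpace X] (F : X → ℝ) (hF : ContDiff ℝ 1 F)
    (hbdd : BddBelow (Set.range F))
    (hPS : ∀ x : ℕ → X, (∃ C : ℝ, ∀ n, |F (x n)| ≤ C) →
      Filter.Tendsto (fun n => ‖gradient F (x n)‖) Filter.atTop (nhds 0) →
      ∃ φ : ℕ → ℕ, StrictMono φ ∧ ∃ l : X,
        Filter.Tendsto (x ∘ φ) Filter.atTop (nhds l)) :
    ∀ M : ℝ, ∃ R : ℝ, ∀ x : X, R < ‖x‖ → M < F x := by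
  by_contra hcon
  push_neg at hcon
  obtain ⟨M, hM⟩ := hcon
  obtain ⟨m, hm⟩ := hbdd
  have hm' : ∀ x, m ≤ F x := fun x => hm (Set.mem_range_self x)
  have hdiff : Differentiable ℝ F := hF.differentiable one_ne_zero
  have hcont : Continuous F := hdiff.continuous
  have hmM : m ≤ M := by
    obtain ⟨x, _, hx2⟩ := hM 0
    exact le_trans (hm' x) hx2
  -- construct PS sequence with norms going to infinity
  have hseq : ∀ n : ℕ, ∃ v : X, (n : ℝ) < ‖v‖ ∧ m ≤ F v ∧ F v ≤ M ∧
      ‖gradient F v‖ ≤ 1/(n+1 : ℝ) := by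
    intro n
    obtain ⟨u, hu1, hu2⟩ := hM ((M - m)*(n+1) + n)
    have hkpos : (0:ℝ) < 1/(n+1 : ℝ) := by positivity
    obtain ⟨v, hv1, hv2, hv3⟩ := my_ekeland F hcont m hm' (1/(n+1:ℝ)) hkpos u
    have hdist : dist u v ≤ (M - m)*(n+1) := by
      have h1 : F u - F v ≤ M - m := by
        have := hm' v; linarith
      have h2 : (1/(n+1:ℝ)) * dist u v ≤ M - m := le_trans hv2 h1
      have hn1 : (0:ℝ) < (n:ℝ)+1 := by positivity
      calc dist u v = ((n:ℝ)+1) * ((1/((n:ℝ)+1)) * dist u v) := by field_simp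
        _ ≤ ((n:ℝ)+1) * (M - m) := mul_le_mul_of_nonneg_left h2 hn1.le
        _ = (M - m)*((n:ℝ)+1) := mul_comm _ _
    refine ⟨v, ?_, hm' v, le_trans hv1 hu2, ?_⟩
    · have := norm_sub_norm_le u v
      rw [← dist_eq_norm] at this
      linarith
    · apply grad_bound F hdiff v _ hkpos.le
      intro w
      exact hv3 w
  choose v hv1 hv2 hv3 hv4 using hseq
  have hFbdd : ∃ C : ℝ, ∀ n, |F (v n)| ≤ C := by
    refine ⟨|M| + |m|, fun n => ?_⟩
    rw [abs_le]
    constructor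
    · have := hv2 n; have := neg_abs_le m; have := abs_nonneg M; linarith
    · have := hv3 n; have := le_abs_self M; have := abs_nonneg m; linarith
  have hgrad0 : Tendsto (fun n => ‖gradient F (v n)‖) atTop (𝓝 0) := by
    apply squeeze_zero (fun n => norm_nonneg _) hv4
    exact tendsto_one_div_add_atTop_nhds_zero_nat
  obtain ⟨φ, hφ, l, hl⟩ := hPS v hFbdd hgrad0
  have hnorm : Tendsto (fun n => ‖(v ∘ φ) n‖) atTop (𝓝 ‖l‖) := hl.norm
  have hev : ∀ᶠ n in atTop, ‖(v ∘ φ) n‖ ≤ ‖l‖ + 1 := by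
    filter_upwards [hnorm.eventually (eventually_le_nhds (by linarith : ‖l‖ < ‖l‖ + 1))]
      with n hn using hn
  have hgrow : ∀ n : ℕ, (n : ℝ) < ‖(v ∘ φ) n‖ := by
    intro n
    calc (n : ℝ) ≤ (φ n : ℝ) := by exact_mod_cast (hφ.id_le n)
    _ < ‖v (φ n)‖ := hv1 (φ n)
  obtain ⟨N, hN⟩ := hev.exists_forall_of_atTop
  obtain ⟨n, hn1, hn2⟩ := ((eventually_ge_atTop N).and (eventually_gt_atTop ⌈‖l‖ + 1⌉₊)).exists
  have h1 := hN n hn1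
  have h2 := hgrow n
  have h3 : ‖l‖ + 1 ≤ (n : ℝ) := le_trans (Nat.le_ceil _) (by exact_mod_cast hn2.le)
  linarith
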